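/- Let B be a normal Hausdorff topological space and let {t_U : B → [0,1]}_{U ∈ 𝒰} be a partition of unity subordinate to a locally finite open cover 𝒰 of B (i.e., each t_U is continuous with support contained in U, and the sum over U of t_U equals 1). For each nonempty finite subset F ⊆ 𝒰 define q_F(x) := max(0, min_{U ∈ F} t_U(x) − sup_{U ∉ F} t_U(x)) and V_F := {x ∈ B | q_F(x) > 0}. Then for any two distinct finite subsets E, F ⊆ 𝒰 with the same cardinality, V_E ∩ V_F = ∅. -/
import Mathlib


open Set

theorem stmt_0 {B : Type*} [TopologicalSpace B] [NormalSpace B] [T2Space B]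
    (𝒰 : Set (Set B)) (h_open : ∀ U ∈ 𝒰, IsOpen U) (h_cover : ⋃₀ 𝒰 = Set.univ)
    (h_lf : LocallyFinite (fun U : 𝒰 => (U : Set B)))
    (t : Set B → B → ℝ)
    (ht_nonneg : ∀ U x, 0 ≤ t U x)
    (ht_cont : ∀ U ∈ 𝒰, Continuous (t U))
    (ht_supp : ∀ U ∈ 𝒰, {x | t U x ≠ 0} ⊆ U)
    (ht_sum : ∀ x, ∑' U : 𝒰, t (U : Set B) x = 1)
    (q : Finset (Set B) → B → ℝ)
    (hq : ∀ F x, q F x =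
      max 0 (sInf ((fun U => t U x) '' (F : Set (Set B))) - ⨆ U ∈ 𝒰 \ (F : Set (Set B)), t U x))
    (V : Finset (Set B) → Set B) (hV : ∀ F, V F = {x | 0 < q F x})
    (E F : Finset (Set B)) (hE : (E : Set (Set B)) ⊆ 𝒰) (hF : (F : Set (Set B)) ⊆ 𝒰)
    (hEne : E.Nonempty) (hFne : F.Nonempty) (hEF : E ≠ F) (hcard : E.card = F.card) :
    V E ∩ V F = ∅ := by
  ext x
  simp only [Set.mem_inter_iff, Set.mem_empty_iff_false, iff_false, not_and]
  intro hxE hxF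
  rw [hV] at hxE hxF
  simp only [Set.mem_setOf_eq, hq] at hxE hxF
  -- extract strict inequalities
  have hxE' : (⨆ U ∈ 𝒰 \ (E : Set (Set B)), t U x) <
      sInf ((fun U => t U x) '' (E : Set (Set B))) := by
    by_contra h
    push_neg at h
    rw [max_eq_left (by linarith)] at hxE
    exact lt_irrefl 0 hxE
  have hxF' : (⨆ U ∈ 𝒰 \ (F : Set (Set B)), t U x) <
      sInf ((fun U => t U x) '' (F : Set (Set B))) := by
    by_contra h
    push_neg at h
    rw [max_eq_left (by linarith)] at hxF
    exact lt_irrefl 0 hxF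
  -- summability gives t U x ≤ 1 for U ∈ 𝒰
  have hsum : Summable (fun U : 𝒰 => t (U : Set B) x) := by
    by_contra h
    exact one_ne_zero ((ht_sum x).symm.trans (tsum_eq_zero_of_not_summable h))
  have hle1 : ∀ U ∈ 𝒰, t U x ≤ 1 := by
    intro U hU
    have := Summable.le_tsum hsum ⟨U, hU⟩ (fun b _ => ht_nonneg b x)
    rw [ht_sum x] at this
    exact this
  -- general facts about the sups
  have sup_le_one : ∀ (S : Set (Set B)), S ⊆ 𝒰 → ∀ W ∈ S, t W x ≤ ⨆ U ∈ S, t U x := by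
    intro S hS W hW
    have hbdd : BddAbove (Set.range fun U => ⨆ _ : U ∈ S, t U x) := by
      refine ⟨1, ?_⟩
      rintro y ⟨U, rfl⟩
      exact Real.iSup_le (fun hU => hle1 U (hS hU)) zero_le_one
    calc t W x = ⨆ _ : W ∈ S, t W x := (ciSup_pos (f := fun _ : W ∈ S => t W x) hW).symm
      _ ≤ ⨆ U ∈ S, t U x := le_ciSup hbdd W
  have inf_le : ∀ (G : Finset (Set B)), ∀ W ∈ G,
      sInf ((fun U => t U x) '' (G : Set (Set B))) ≤ t W x := by
    intro G W hW
    exact csInf_le ((G.finite_toSet.image _).bddBelow) ⟨W, hW, rfl⟩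
  -- pick witnesses
  have hEsub : ¬ (E : Set (Set B)) ⊆ (F : Set (Set B)) := by
    intro h
    exact hEF (Finset.eq_of_subset_of_card_le (fun a ha => h ha) hcard.ge)
  have hFsub : ¬ (F : Set (Set B)) ⊆ (E : Set (Set B)) := by
    intro h
    exact hEF (Finset.eq_of_subset_of_card_le (fun a ha => h ha) hcard.le).symm
  obtain ⟨U, hUE, hUF⟩ := Set.not_subset.mp hEsub
  obtain ⟨W, hWF, hWE⟩ := Set.not_subset.mp hFsub
  -- U ∈ E \ F, W ∈ F \ E
  have h1 : t W x < t U x := by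
    calc t W x ≤ ⨆ U ∈ 𝒰 \ (E : Set (Set B)), t U x :=
          sup_le_one _ (Set.diff_subset) W ⟨hF hWF, hWE⟩
      _ < sInf ((fun U => t U x) '' (E : Set (Set B))) := hxE'
      _ ≤ t U x := inf_le E U hUE
  have h2 : t U x < t W x := by
    calc t U x ≤ ⨆ U ∈ 𝒰 \ (F : Set (Set B)), t U x :=
          sup_le_one _ (Set.diff_subset) U ⟨hE hUE, hUF⟩
      _ < sInf ((fun U => t U x) '' (F : Set (Set B))) := hxF'
      _ ≤ t W x := inf_le F W hWF
  linarith
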